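/- Let C be a category and let C'' ⊆ C' ⊆ C be full subcategories (closed under isomorphisms). Call a full subcategory D of a category E rejective in E if the inclusion functor D → E admits a left adjoint whose unit is an epimorphism (in E) at every object of E, and also admits a right adjoint whose counit is a monomorphism (in E) at every object of E. If C'' is rejective in C' and C' is rejective in C, then C'' is rejective in C. -/

import Mathlib

open CategoryTheory

universe v u

/-- A full subcategory (given by a predicate `Z` on objects) of a category `C` is rejective
if the inclusion functor admits a left adjoint whose unit is an epimorphism at every object
of `C`, and a right adjoint whose counit is a monomorphism at every object of `C`. -/
def IsRejective {C : Type u} [Category.{v} C] (Z : C → Prop) : Prop :=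
  (∃ (L : C ⥤ ObjectProperty.FullSubcategory Z) (adj : L ⊣ ObjectProperty.ι Z),
    ∀ X : C, Epi (adj.unit.app X)) ∧
  (∃ (R : C ⥤ ObjectProperty.FullSubcategory Z) (adj : ObjectProperty.ι Z ⊣ R),
    ∀ X : C, Mono (adj.counit.app X))

section Aux

variable {C : Type u} [Category.{v} C] {Z : C → Prop}

/-- An epi in the full subcategory is an epi in `C`, given a right adjoint to the
inclusion with mono counit. -/
lemma epi_incl_map_aux (R : C ⥤ ObjectProperty.FullSubcategory Z)
    (adjR : ObjectProperty.ι Z ⊣ R)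
    (hmono : ∀ X : C, Mono (adjR.counit.app X))
    {A B : ObjectProperty.FullSubcategory Z} (f : A ⟶ B) [hf : Epi f] :
    Epi ((ObjectProperty.ι Z).map f) := by
  constructor
  intro Y g h hgh
  have := congrArg (adjR.homEquiv A Y) hgh
  rw [Adjunction.homEquiv_naturality_left, Adjunction.homEquiv_naturality_left] at this
  exact (adjR.homEquiv B Y).injective (hf.left_cancellation _ _ this)

/-- A mono in the full subcategory is a mono in `C`, given a left adjoint to the
inclusion with epi unit. -/
lemma mono_incl_map_aux (L : C ⥤ ObjectProperty.FullSubcategory Z)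
    (adjL : L ⊣ ObjectProperty.ι Z)
    (hepi : ∀ X : C, Epi (adjL.unit.app X))
    {A B : ObjectProperty.FullSubcategory Z} (f : A ⟶ B) [hf : Mono f] :
    Mono ((ObjectProperty.ι Z).map f) := by
  constructor
  intro Y g h hgh
  have := congrArg (adjL.homEquiv Y B).symm hgh
  rw [Adjunction.homEquiv_naturality_right_symm,
    Adjunction.homEquiv_naturality_right_symm] at this
  exact (adjL.homEquiv Y A).symm.injective (hf.right_cancellation _ _ this)

end Aux

section Equiv

variable {C : Type u} [Category.{v} C] (Z' Z'' : C → Prop)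
  (hsub : ∀ X : C, Z'' X → Z' X)

/-- Flattening functor. -/
def eFunctor : ObjectProperty.FullSubcategory (fun X : ObjectProperty.FullSubcategory Z' => Z'' X.obj) ⥤
    ObjectProperty.FullSubcategory Z'' where
  obj X := ⟨X.obj.obj, X.property⟩
  map f := ⟨f.hom.hom⟩

/-- Unflattening functor. -/
def eInverse : ObjectProperty.FullSubcategory Z'' ⥤
    ObjectProperty.FullSubcategory (fun X : ObjectProperty.FullSubcategory Z' => Z'' X.obj) where
  obj X := ⟨⟨X.obj, hsub X.obj X.property⟩, X.property⟩
  map f := ⟨⟨f.hom⟩⟩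

/-- Adjunction (actually equivalence) between flattening and unflattening. -/
def eAdj : eFunctor Z' Z'' ⊣ eInverse Z' Z'' hsub :=
  Adjunction.mkOfHomEquiv
    { homEquiv := fun _ _ => Equiv.mk (fun f => ⟨⟨f.hom⟩⟩) (fun f => ⟨f.hom.hom⟩)
        (fun _ => rfl) (fun _ => rfl)
      homEquiv_naturality_left_symm := fun _ _ => rfl
      homEquiv_naturality_right := fun _ _ => rfl }

/-- Adjunction in the other direction. -/
def eAdj' : eInverse Z' Z'' hsub ⊣ eFunctor Z' Z'' :=
  Adjunction.mkOfHomEquiv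
    { homEquiv := fun _ _ => Equiv.mk (fun f => ⟨f.hom.hom⟩) (fun f => ⟨⟨f.hom⟩⟩)
        (fun _ => rfl) (fun _ => rfl)
      homEquiv_naturality_left_symm := fun _ _ => rfl
      homEquiv_naturality_right := fun _ _ => rfl }

end Equiv

/-- Transitivity of rejectivity: if `C'' ⊆ C' ⊆ C` are full subcategories (closed under
isomorphisms), `C''` is rejective in `C'`, and `C'` is rejective in `C`, then `C''` is
rejective in `C`. -/
theorem stmt_19 {C : Type u} [Category.{v} C] (Z' Z'' : C → Prop)
    (hsub : ∀ X : C, Z'' X → Z' X)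
    (hiso' : ∀ X Y : C, (X ≅ Y) → Z' X → Z' Y)
    (hiso'' : ∀ X Y : C, (X ≅ Y) → Z'' X → Z'' Y)
    (h1 : IsRejective (C := ObjectProperty.FullSubcategory Z') (fun X => Z'' X.obj))
    (h2 : IsRejective Z') :
    IsRejective Z'' := by
  obtain ⟨⟨L1, adjL1, hL1⟩, ⟨R1, adjR1, hR1⟩⟩ := h1
  obtain ⟨⟨L2, adjL2, hL2⟩, ⟨R2, adjR2, hR2⟩⟩ := h2
  constructor
  · refine ⟨(L2 ⋙ L1) ⋙ eFunctor Z' Z'',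
      ((adjL2.comp adjL1).comp (eAdj Z' Z'' hsub) :
        (L2 ⋙ L1) ⋙ eFunctor Z' Z'' ⊣
          eInverse Z' Z'' hsub ⋙
            ObjectProperty.ι (fun X : ObjectProperty.FullSubcategory Z' => Z'' X.obj) ⋙
              ObjectProperty.ι Z'), ?_⟩
    intro X
    rw [Adjunction.comp_unit_app, Adjunction.comp_unit_app]
    have h1 : Epi (adjL2.unit.app X) := hL2 X
    have h2 : Epi ((ObjectProperty.ι Z').map (adjL1.unit.app (L2.obj X))) :=
      epi_incl_map_aux R2 adjR2 hR2 _ (hf := hL1 _)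
    have h3 : Epi ((ObjectProperty.ι (fun X : ObjectProperty.FullSubcategory Z' => Z'' X.obj) ⋙
        ObjectProperty.ι Z').map
          ((eAdj Z' Z'' hsub).unit.app ((L2 ⋙ L1).obj X))) := by
      show Epi (𝟙 _)
      infer_instance
    exact @epi_comp _ _ _ _ _ _ (@epi_comp _ _ _ _ _ _ h1 _ h2) _ h3
  · refine ⟨(R2 ⋙ R1) ⋙ eFunctor Z' Z'',
      (((eAdj' Z' Z'' hsub).comp adjR1).comp adjR2 :
        ((eInverse Z' Z'' hsub ⋙
            ObjectProperty.ι (fun X : ObjectProperty.FullSubcategory Z' => Z'' X.obj)) ⋙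
              ObjectProperty.ι Z') ⊣ R2 ⋙ R1 ⋙ eFunctor Z' Z''), ?_⟩
    intro X
    rw [Adjunction.comp_counit_app, Adjunction.comp_counit_app]
    have h1 : Mono (adjR2.counit.app X) := hR2 X
    have h2 : Mono ((ObjectProperty.ι Z').map (adjR1.counit.app (R2.obj X))) :=
      mono_incl_map_aux L2 adjL2 hL2 _ (hf := hR1 _)
    have h3 : Mono ((ObjectProperty.ι Z').map
        ((ObjectProperty.ι (fun X : ObjectProperty.FullSubcategory Z' => Z'' X.obj)).map
          ((eAdj' Z' Z'' hsub).counit.app (R1.obj (R2.obj X))))) := by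
      show Mono (𝟙 _)
      infer_instance
    rw [Functor.map_comp]
    exact @mono_comp _ _ _ _ _ _ (@mono_comp _ _ _ _ _ _ h3 _ h2) _ h1
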